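/- Let n be even, let J be an invertible skew-symmetric n×n matrix over 𝔽, and let A be a skew-symmetric n×n matrix with trace(J·A) = 0 and rank A = 2r. Then there exist vectors x₁,…,x_r, y₁,…,y_r, all lying in the column space of A, such that A = Σᵢ₌₁^r (xᵢ yᵢᵀ − yᵢ xᵢᵀ) and xᵢᵀ J yᵢ = 0 for every i. -/

import Mathlib

open Matrix

section Aux

variable {F : Type*} [Field F] {n : ℕ}

lemma aux_ext_mulVec {A B : Matrix (Fin n) (Fin n) F} (h : ∀ v, A *ᵥ v = B *ᵥ v) : A = B := by
  ext i j
  have := congrFun (h (Pi.single j 1)) i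
  simpa [mulVec_single] using this

lemma aux_vecMulVec_mulVec (a b w : Fin n → F) :
    (vecMulVec a b) *ᵥ w = (b ⬝ᵥ w) • a := by
  ext i
  simp [vecMulVec_apply, mulVec, dotProduct, Finset.mul_sum, mul_comm, mul_assoc, mul_left_comm]

lemma aux_trace_vecMulVec (a b : Fin n → F) : trace (vecMulVec a b) = a ⬝ᵥ b := by
  simp [Matrix.trace, vecMulVec_apply, dotProduct, Matrix.diag]

lemma aux_mul_vecMulVec (J : Matrix (Fin n) (Fin n) F) (a b : Fin n → F) :
    J * vecMulVec a b = vecMulVec (J *ᵥ a) b := by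
  ext i j
  simp [mul_apply, vecMulVec_apply, mulVec, dotProduct, Finset.sum_mul, mul_assoc]

lemma aux_transpose_vecMulVec (a b : Fin n → F) :
    (vecMulVec a b)ᵀ = vecMulVec b a := by
  ext i j; simp [vecMulVec_apply, mul_comm]

lemma aux_skew_dot {A : Matrix (Fin n) (Fin n) F} (hA : Aᵀ = -A) (a b : Fin n → F) :
    a ⬝ᵥ (A *ᵥ b) = -(b ⬝ᵥ (A *ᵥ a)) := by
  rw [dotProduct_mulVec, ← mulVec_transpose, hA]
  rw [neg_mulVec]
  simp [dotProduct_comm]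

lemma aux_skew_self_dot [CharZero F] {A : Matrix (Fin n) (Fin n) F} (hA : Aᵀ = -A)
    (w : Fin n → F) : w ⬝ᵥ (A *ᵥ w) = 0 := by
  have h := aux_skew_dot hA w w
  have h2 : (2 : F) ≠ 0 := two_ne_zero
  have : (2 : F) * (w ⬝ᵥ (A *ᵥ w)) = 0 := by linear_combination h
  exact (mul_eq_zero.mp this).resolve_left h2


lemma aux_dot_zero {w : Fin n → F} (h : ∀ u, u ⬝ᵥ w = 0) : w = 0 := by
  ext i
  simpa [single_dotProduct] using h (Pi.single i 1)

lemma aux_hyperplane {w₁ w₂ : Fin n → F} (h : ∀ u, u ⬝ᵥ w₁ = 0 → u ⬝ᵥ w₂ = 0) :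
    ∃ c : F, w₂ = c • w₁ := by
  by_cases h1 : w₁ = 0
  · refine ⟨0, ?_⟩
    subst h1
    simpa using aux_dot_zero (fun u => h u (by simp))
  · obtain ⟨j, hj⟩ : ∃ j, w₁ j ≠ 0 := by
      by_contra hc; push_neg at hc; exact h1 (funext fun i => hc i)
    refine ⟨w₂ j / w₁ j, ?_⟩
    ext i
    have hu := h (Pi.single i (w₁ j) - Pi.single j (w₁ i)) (by
      simp [sub_dotProduct, single_dotProduct]; ring)
    simp only [sub_dotProduct, single_dotProduct] at hu
    have : w₁ j * w₂ i = w₁ i * w₂ j := by linear_combination hu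
    have : w₂ i = w₂ j / w₁ j * w₁ i := by field_simp; linear_combination this
    simpa using this


lemma aux_const_ratio {A S : Matrix (Fin n) (Fin n) F}
    (h : ∀ v, ∃ c : F, A *ᵥ v = c • (S *ᵥ v)) :
    ∃ c : F, ∀ v, A *ᵥ v = c • (S *ᵥ v) := by
  by_cases hS : ∀ v, S *ᵥ v = 0
  · refine ⟨0, fun v => ?_⟩
    obtain ⟨c, hc⟩ := h v
    rw [hc, hS v, smul_zero, smul_zero]
  · push_neg at hS
    obtain ⟨v₀, hv₀⟩ := hS
    obtain ⟨c₀, hc₀⟩ := h v₀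
    refine ⟨c₀, fun v => ?_⟩
    obtain ⟨cv, hcv⟩ := h v
    by_cases hsv : S *ᵥ v = 0
    · rw [hcv, hsv, smul_zero, smul_zero]
    by_cases hdep : ∃ μ : F, S *ᵥ v = μ • (S *ᵥ v₀)
    · obtain ⟨μ, hμ⟩ := hdep
      obtain ⟨cw, hcw⟩ := h (v - μ • v₀)
      have hSw : S *ᵥ (v - μ • v₀) = 0 := by
        rw [mulVec_sub, mulVec_smul, hμ, sub_self]
      have hAw : A *ᵥ (v - μ • v₀) = 0 := by rw [hcw, hSw, smul_zero]
      rw [mulVec_sub, mulVec_smul, sub_eq_zero] at hAw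
      rw [hAw, hc₀, hμ, smul_comm]
    · obtain ⟨c', hc'⟩ := h (v + v₀)
      have hsum : c' • (S *ᵥ v) + c' • (S *ᵥ v₀) = cv • (S *ᵥ v) + c₀ • (S *ᵥ v₀) := by
        rw [← smul_add, ← mulVec_add, ← hc', mulVec_add, hcv, hc₀]
      have key : (c' - cv) • (S *ᵥ v) = (c₀ - c') • (S *ᵥ v₀) := by
        rw [sub_smul, sub_smul, sub_eq_sub_iff_add_eq_add]
        rw [add_comm (c₀ • (S *ᵥ v₀))]
        exact hsum
      by_cases hcc : c' - cv = 0
      · rw [hcc, zero_smul] at key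
        have hc0c : c₀ - c' = 0 := by
          rcases smul_eq_zero.mp key.symm with h' | h'
          · exact h'
          · exact absurd h' hv₀
        have h1 : c' = cv := sub_eq_zero.mp hcc
        have h2 : c₀ = c' := sub_eq_zero.mp hc0c
        rw [hcv, h1.symm.trans h2.symm]
      · exfalso
        apply hdep
        refine ⟨(c' - cv)⁻¹ * (c₀ - c'), ?_⟩
        rw [mul_smul, ← key, inv_smul_smul₀ hcc]


lemma aux_idem_eq_zero [CharZero F] {T : Matrix (Fin n) (Fin n) F}
    (h : T * T = T) (htr : trace T = 0) : T = 0 := by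
  set f := T.mulVecLin with hf
  have hff : f ∘ₗ f = f := by rw [hf, ← Matrix.mulVecLin_mul, h]
  have hproj : LinearMap.IsProj (LinearMap.range f) f := by
    constructor
    · intro x; exact LinearMap.mem_range_self f x
    · rintro x ⟨y, rfl⟩
      exact congrFun (congrArg DFunLike.coe hff) y
  have htr' : LinearMap.trace F (Fin n → F) f = (Module.finrank F (LinearMap.range f) : F) :=
    hproj.trace
  have htrT : LinearMap.trace F (Fin n → F) f = trace T := by
    rw [LinearMap.trace_eq_matrix_trace F (Pi.basisFun F (Fin n)) f,
      LinearMap.toMatrix_eq_toMatrix']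
    congr 1
    rw [hf, ← Matrix.toLin'_apply', LinearMap.toMatrix'_toLin']
  have h0 : (Module.finrank F (LinearMap.range f) : F) = 0 := by
    rw [← htr', htrT, htr]
  have hrank0 : Module.finrank F (LinearMap.range f) = 0 := by exact_mod_cast h0
  have hbot : LinearMap.range f = ⊥ := Submodule.finrank_eq_zero.mp hrank0
  apply aux_ext_mulVec
  intro v
  have : f v ∈ LinearMap.range f := LinearMap.mem_range_self f v
  rw [hbot] at this
  simpa [hf] using this


lemma aux_good_pair [CharZero F] {J A : Matrix (Fin n) (Fin n) F} (hJinv : IsUnit J)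
    (hAskew : Aᵀ = -A) (htr : trace (J * A) = 0) (hA : A ≠ 0) :
    ∃ u v, u ⬝ᵥ (A *ᵥ v) ≠ 0 ∧ (A *ᵥ u) ⬝ᵥ (J *ᵥ (A *ᵥ v)) = 0 := by
  by_contra hbad
  push_neg at hbad
  set S := Aᵀ * J * A with hSdef
  have hSv : ∀ u v, u ⬝ᵥ (S *ᵥ v) = (A *ᵥ u) ⬝ᵥ (J *ᵥ (A *ᵥ v)) := by
    intro u v
    rw [hSdef, ← mulVec_mulVec, ← mulVec_mulVec, dotProduct_mulVec, vecMul_transpose]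
  have h_each : ∀ v, ∃ c : F, A *ᵥ v = c • (S *ᵥ v) := by
    intro v
    apply aux_hyperplane
    intro u hu0
    by_contra h'
    exact hbad u v h' (by rw [← hSv]; exact hu0)
  obtain ⟨c, hc⟩ := aux_const_ratio h_each
  have hA_eq : A = c • S := aux_ext_mulVec (fun v => by rw [hc v, smul_mulVec])
  have hc0 : c ≠ 0 := fun h0 => hA (by rw [hA_eq, h0, zero_smul])
  have h1 : A = (-c) • (A * J * A) := by
    conv_lhs => rw [hA_eq]
    rw [hSdef, hAskew, neg_mul, neg_mul, smul_neg, neg_smul]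
  have hAJA : A * J * A = (-c)⁻¹ • A :=
    ((inv_smul_eq_iff₀ (neg_ne_zero.mpr hc0)).mpr h1).symm
  set T := (-c) • (J * A) with hTdef
  have hTT : T * T = T := by
    rw [hTdef, smul_mul_smul_comm, mul_assoc J A (J * A), ← mul_assoc A J A, hAJA,
      mul_smul_comm, smul_smul]
    congr 1
    field_simp
  have hTtr : trace T = 0 := by rw [hTdef, trace_smul, htr, smul_zero]
  have hT0 : T = 0 := aux_idem_eq_zero hTT hTtr
  have hJA : J * A = 0 := by
    rcases smul_eq_zero.mp hT0 with h' | h'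
    · exact absurd (neg_eq_zero.mp h') hc0
    · exact h'
  obtain ⟨U, hU⟩ := hJinv
  apply hA
  calc A = (↑U⁻¹ * J) * A := by rw [← hU, Units.inv_mul, one_mul]
    _ = ↑U⁻¹ * (J * A) := by rw [mul_assoc]
    _ = 0 := by rw [hJA, mul_zero]


theorem key_induction [CharZero F] (J : Matrix (Fin n) (Fin n) F)
    (hJskew : Jᵀ = -J) (hJinv : IsUnit J) :
    ∀ r (A : Matrix (Fin n) (Fin n) F), Aᵀ = -A → trace (J * A) = 0 → A.rank = 2 * r →
    ∃ x y : Fin r → (Fin n → F),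
      (∀ i, ∃ u, A *ᵥ u = x i) ∧ (∀ i, ∃ u, A *ᵥ u = y i) ∧
      A = ∑ i, (vecMulVec (x i) (y i) - vecMulVec (y i) (x i)) ∧
      ∀ i, x i ⬝ᵥ (J *ᵥ y i) = 0 := by
  intro r
  induction r with
  | zero =>
    intro A hAskew htr hrank
    have h0 : Module.finrank F (LinearMap.range A.mulVecLin) = 0 := by
      have : A.rank = 0 := by omega
      exact this
    have hbot : LinearMap.range A.mulVecLin = ⊥ := Submodule.finrank_eq_zero.mp h0
    have hA0 : A = 0 := by
      apply aux_ext_mulVec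
      intro w
      have : A.mulVecLin w ∈ LinearMap.range A.mulVecLin := LinearMap.mem_range_self _ w
      rw [hbot] at this
      simpa using this
    exact ⟨fun i => i.elim0, fun i => i.elim0, fun i => i.elim0, fun i => i.elim0,
      by simp [hA0], fun i => i.elim0⟩
  | succ r ih =>
    intro A hAskew htr hrank
    have hA0 : A ≠ 0 := by
      intro h
      rw [h, Matrix.rank_zero] at hrank
      omega
    obtain ⟨u, v, hc0, hiso⟩ := aux_good_pair hJinv hAskew htr hA0
    set c : F := u ⬝ᵥ (A *ᵥ v) with hcdef
    set x₀ : Fin n → F := A *ᵥ u with hx₀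
    set y₀ : Fin n → F := c⁻¹ • (A *ᵥ v) with hy₀
    set M : Matrix (Fin n) (Fin n) F := vecMulVec x₀ y₀ - vecMulVec y₀ x₀ with hM
    set A' : Matrix (Fin n) (Fin n) F := A - M with hA'
    -- basic dot product facts
    have hx₀u : x₀ ⬝ᵥ u = 0 := by
      rw [hx₀, dotProduct_comm]; exact aux_skew_self_dot hAskew u
    have hy₀v : y₀ ⬝ᵥ v = 0 := by
      rw [hy₀, smul_dotProduct, dotProduct_comm, aux_skew_self_dot hAskew v, smul_zero]
    have hy₀u : y₀ ⬝ᵥ u = 1 := by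
      rw [hy₀, smul_dotProduct, dotProduct_comm, ← hcdef, smul_eq_mul, inv_mul_cancel₀ hc0]
    have hx₀v : x₀ ⬝ᵥ v = -c := by
      rw [hx₀, dotProduct_comm, aux_skew_dot hAskew v u, ← hcdef]
    have hMw : ∀ w, M *ᵥ w = (y₀ ⬝ᵥ w) • x₀ - (x₀ ⬝ᵥ w) • y₀ := by
      intro w
      rw [hM, sub_mulVec, aux_vecMulVec_mulVec, aux_vecMulVec_mulVec]
    have hA'u : A' *ᵥ u = 0 := by
      rw [hA', sub_mulVec, hMw, hy₀u, hx₀u, one_smul, zero_smul, sub_zero, ← hx₀, sub_self]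
    have hA'v : A' *ᵥ v = 0 := by
      rw [hA', sub_mulVec, hMw, hy₀v, hx₀v, zero_smul, zero_sub, neg_smul, neg_neg, hy₀,
        smul_inv_smul₀ hc0, sub_self]
    have hker : ∀ w, A *ᵥ w = 0 → A' *ᵥ w = 0 := by
      intro w hw
      have h1 : x₀ ⬝ᵥ w = 0 := by
        rw [hx₀, dotProduct_comm, aux_skew_dot hAskew w u, hw]
        simp
      have h2 : y₀ ⬝ᵥ w = 0 := by
        rw [hy₀, smul_dotProduct, dotProduct_comm, aux_skew_dot hAskew w v, hw]
        simp
      rw [hA', sub_mulVec, hMw, h1, h2, zero_smul, zero_smul, sub_self, hw, sub_self]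
    have hrange : ∀ w, ∃ w', A *ᵥ w' = A' *ᵥ w := by
      intro w
      refine ⟨w - (y₀ ⬝ᵥ w) • u + (x₀ ⬝ᵥ w) • (c⁻¹ • v), ?_⟩
      rw [mulVec_add, mulVec_sub, mulVec_smul, mulVec_smul, mulVec_smul, ← hx₀, ← hy₀,
        hA', sub_mulVec, hMw]
      rw [sub_add]
    have hMskew : Mᵀ = -M := by
      rw [hM, transpose_sub, aux_transpose_vecMulVec, aux_transpose_vecMulVec, neg_sub]
    have hA'skew : A'ᵀ = -A' := by
      rw [hA', transpose_sub, hAskew, hMskew]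
      abel
    have hx₀Jy₀ : x₀ ⬝ᵥ (J *ᵥ y₀) = 0 := by
      rw [hy₀, mulVec_smul, dotProduct_smul, smul_eq_mul, ← hx₀] at *
      rw [hiso, mul_zero]
    have htr' : trace (J * A') = 0 := by
      have hJM : trace (J * M) = 0 := by
        rw [hM, mul_sub, trace_sub, aux_mul_vecMulVec, aux_mul_vecMulVec,
          aux_trace_vecMulVec, aux_trace_vecMulVec]
        have e1 : (J *ᵥ x₀) ⬝ᵥ y₀ = 0 := by
          rw [dotProduct_comm, aux_skew_dot hJskew y₀ x₀, hx₀Jy₀, neg_zero]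
        have e2 : (J *ᵥ y₀) ⬝ᵥ x₀ = 0 := by
          rw [dotProduct_comm, hx₀Jy₀]
        rw [e1, e2, sub_self]
      rw [hA', mul_sub, trace_sub, htr, hJM, sub_self]
    -- rank bookkeeping
    have hx₀0 : x₀ ≠ 0 := by
      intro h
      rw [h, zero_dotProduct] at hx₀v
      exact hc0 (by rw [← neg_eq_zero, ← hx₀v])
    have hy₀0 : y₀ ≠ 0 := by
      intro h
      rw [h, zero_dotProduct] at hy₀u
      exact one_ne_zero hy₀u.symm
    have hrank' : A'.rank = 2 * r := by
      set f := A.mulVecLin with hf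
      set f' := A'.mulVecLin with hf'
      set K := LinearMap.ker f with hK
      set K' := LinearMap.ker f' with hK'
      set W : Submodule F (Fin n → F) := Submodule.span F ({u, v} : Set (Fin n → F)) with hW
      set W₂ : Submodule F (Fin n → F) :=
        Submodule.span F ({x₀, y₀} : Set (Fin n → F)) with hW₂
      have hKK' : K ≤ K' := by
        intro w hw
        rw [hK, LinearMap.mem_ker, hf, mulVecLin_apply] at hw
        rw [hK', LinearMap.mem_ker, hf', mulVecLin_apply]
        exact hker w hw
      have hWK' : W ≤ K' := by
        rw [hW, Submodule.span_le]
        rintro z hz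
        rcases hz with rfl | rfl
        · rw [SetLike.mem_coe, hK', LinearMap.mem_ker, hf', mulVecLin_apply]; exact hA'u
        · rw [SetLike.mem_coe, hK', LinearMap.mem_ker, hf', mulVecLin_apply]; exact hA'v
      have hKW : K ⊓ W = ⊥ := by
        rw [Submodule.eq_bot_iff]
        rintro w hw
        obtain ⟨hwK, hwW⟩ := Submodule.mem_inf.mp hw
        rw [hK, LinearMap.mem_ker, hf, mulVecLin_apply] at hwK
        obtain ⟨a, b, hab⟩ := Submodule.mem_span_pair.mp hwW
        have hb : b = 0 := by
          have : u ⬝ᵥ (A *ᵥ w) = 0 := by rw [hwK, dotProduct_zero]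
          rw [← hab, mulVec_add, mulVec_smul, mulVec_smul, dotProduct_add,
            dotProduct_smul, dotProduct_smul, aux_skew_self_dot hAskew u, ← hcdef] at this
          simp only [smul_eq_mul, mul_zero, zero_add] at this
          exact (mul_eq_zero.mp this).resolve_right hc0
        have ha : a = 0 := by
          have : v ⬝ᵥ (A *ᵥ w) = 0 := by rw [hwK, dotProduct_zero]
          rw [← hab, hb, zero_smul, add_zero, mulVec_smul, dotProduct_smul,
            aux_skew_dot hAskew v u, ← hcdef] at this
          simp only [smul_eq_mul, mul_neg] at this
          have := neg_eq_zero.mp this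
          exact (mul_eq_zero.mp this).resolve_right hc0
        rw [← hab, ha, hb, zero_smul, zero_smul, add_zero]
      have hli : LinearIndependent F ![u, v] := by
        rw [LinearIndependent.pair_iff]
        intro s t hst
        have h1 : u ⬝ᵥ (A *ᵥ (s • u + t • v)) = 0 := by rw [hst, mulVec_zero, dotProduct_zero]
        rw [mulVec_add, mulVec_smul, mulVec_smul, dotProduct_add, dotProduct_smul,
          dotProduct_smul, aux_skew_self_dot hAskew u, ← hcdef] at h1
        simp only [smul_eq_mul, mul_zero, zero_add] at h1
        have ht : t = 0 := (mul_eq_zero.mp h1).resolve_right hc0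
        have h2 : v ⬝ᵥ (A *ᵥ (s • u + t • v)) = 0 := by rw [hst, mulVec_zero, dotProduct_zero]
        rw [mulVec_add, mulVec_smul, mulVec_smul, dotProduct_add, dotProduct_smul,
          dotProduct_smul, aux_skew_dot hAskew v u, ← hcdef, aux_skew_self_dot hAskew v] at h2
        simp only [smul_eq_mul, mul_zero, add_zero, mul_neg] at h2
        have hs : s = 0 := (mul_eq_zero.mp (neg_eq_zero.mp h2)).resolve_right hc0
        exact ⟨hs, ht⟩
      have hWfr : Module.finrank F W = 2 := by
        have hset : ({u, v} : Set (Fin n → F)) = Set.range ![u, v] := by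
          ext z
          simp [Fin.exists_fin_two, eq_comm, or_comm]
        rw [hW, hset, finrank_span_eq_card hli]
        simp
      have hsupfr := Submodule.finrank_sup_add_finrank_inf_eq K W
      rw [hKW, finrank_bot, add_zero, hWfr] at hsupfr
      have hmono : Module.finrank F (K ⊔ W : Submodule F (Fin n → F)) ≤ Module.finrank F K' :=
        Submodule.finrank_mono (sup_le hKK' hWK')
      have hrn1 := LinearMap.finrank_range_add_finrank_ker f
      have hrn2 := LinearMap.finrank_range_add_finrank_ker f'
      rw [← hK'] at hrn2
      rw [← hK] at hrn1
      have hrA : A.rank = Module.finrank F (LinearMap.range f) := rfl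
      have hrA' : A'.rank = Module.finrank F (LinearMap.range f') := rfl
      -- other direction
      have hsub : LinearMap.range f ≤ LinearMap.range f' ⊔ W₂ := by
        rintro z ⟨w, rfl⟩
        have hz : f w = f' w + M *ᵥ w := by
          rw [hf, hf', mulVecLin_apply, mulVecLin_apply, hA', sub_mulVec]
          abel
        rw [hz]
        refine Submodule.add_mem _ (Submodule.mem_sup_left (LinearMap.mem_range_self f' w)) ?_
        refine Submodule.mem_sup_right ?_
        rw [hMw, hW₂]
        exact Submodule.mem_span_pair.mpr ⟨y₀ ⬝ᵥ w, -(x₀ ⬝ᵥ w), by rw [neg_smul]; abel⟩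
      have hW₂fr : Module.finrank F W₂ ≤ 2 := by
        have : W₂ = Submodule.span F {x₀} ⊔ Submodule.span F {y₀} := by
          rw [hW₂, Set.insert_eq, Submodule.span_union]
        rw [this]
        have h1 := Submodule.finrank_sup_add_finrank_inf_eq
          (Submodule.span F {x₀}) (Submodule.span F {y₀})
        rw [finrank_span_singleton hx₀0, finrank_span_singleton hy₀0] at h1
        omega
      have hup : A.rank ≤ A'.rank + 2 := by
        have h1 := Submodule.finrank_mono hsub
        have h2 := Submodule.finrank_sup_add_finrank_inf_eq (LinearMap.range f') W₂
        rw [hrA, hrA']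
        omega
      omega
    obtain ⟨x, y, hx, hy, hsum, hisor⟩ := ih A' hA'skew htr' hrank'
    refine ⟨Fin.cons x₀ x, Fin.cons y₀ y, ?_, ?_, ?_, ?_⟩
    · intro i
      refine Fin.cases ?_ ?_ i
      · exact ⟨u, by rw [Fin.cons_zero, hx₀]⟩
      · intro j
        obtain ⟨w, hw⟩ := hx j
        obtain ⟨w', hw'⟩ := hrange w
        exact ⟨w', by rw [Fin.cons_succ, hw', hw]⟩
    · intro i
      refine Fin.cases ?_ ?_ i
      · exact ⟨c⁻¹ • v, by rw [Fin.cons_zero, hy₀, mulVec_smul]⟩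
      · intro j
        obtain ⟨w, hw⟩ := hy j
        obtain ⟨w', hw'⟩ := hrange w
        exact ⟨w', by rw [Fin.cons_succ, hw', hw]⟩
    · rw [Fin.sum_univ_succ]
      simp only [Fin.cons_zero, Fin.cons_succ]
      rw [← hsum, ← hM]
      rw [hA']
      abel
    · intro i
      refine Fin.cases ?_ ?_ i
      · rw [Fin.cons_zero, Fin.cons_zero]; exact hx₀Jy₀
      · intro j
        rw [Fin.cons_succ, Fin.cons_succ]
        exact hisor j

end Aux

/-- Let `n` be even, `J` an invertible skew-symmetric `n×n` matrix, and `A` a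
skew-symmetric `n×n` matrix with `trace(J·A) = 0` and `rank A = 2r`. Then there are vectors
`x₁,…,x_r, y₁,…,y_r` in the column space of `A` with `A = Σᵢ (xᵢ yᵢᵀ − yᵢ xᵢᵀ)` and
`xᵢᵀ J yᵢ = 0` for every `i`. -/
theorem stmt_7 (F : Type*) [Field F] [CharZero F] [IsAlgClosed F]
    (n r : ℕ) (hn : Even n) (J A : Matrix (Fin n) (Fin n) F)
    (hJskew : Jᵀ = -J) (hJinv : IsUnit J)
    (hAskew : Aᵀ = -A) (htr : trace (J * A) = 0) (hrank : A.rank = 2 * r) :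
    ∃ x y : Fin r → (Fin n → F),
      (∀ i, ∃ u, A *ᵥ u = x i) ∧ (∀ i, ∃ u, A *ᵥ u = y i) ∧
      A = ∑ i, (vecMulVec (x i) (y i) - vecMulVec (y i) (x i)) ∧
      ∀ i, x i ⬝ᵥ (J *ᵥ y i) = 0 :=
  key_induction J hJskew hJinv r A hAskew htr hrank
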